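/- Let m ≥ 1 and n = 3m² − 3m + 1. Then the minimum exterior perimeter over sets of n cells of the hexagonal honeycomb equals 12m − 6 = √(48n − 12), and a set S with |S| = n achieves t(S) = 12m − 6 if and only if S is a closed ball B(c, m − 1) in the graph metric for some cell c (a regular hexagonal cluster). In particular, for these values of n the minimizer is unique up to translation. -/

import Mathlib

/-- The six neighbor directions of the combinatorial hexagonal honeycomb. -/
def hexDirs : Finset (ℤ × ℤ) := {(1,0),(-1,0),(0,1),(0,-1),(1,-1),(-1,1)}

lemma neg_mem_hexDirs {d : ℤ × ℤ} (h : d ∈ hexDirs) : -d ∈ hexDirs := by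
  fin_cases h <;> decide

/-- The adjacency graph of the hexagonal honeycomb. -/
def hexGraph : SimpleGraph (ℤ × ℤ) where
  Adj x y := x - y ∈ hexDirs
  symm := by
    refine ⟨?_⟩
    intro x y h
    rw [show y - x = -(x - y) by ring]
    exact neg_mem_hexDirs h
  loopless := by
    refine ⟨?_⟩
    intro x h
    rw [sub_self] at h
    exact absurd h (by decide)

/-- Exterior perimeter: the number of pairs `(x, y)` with `x ∈ S`, `y ∉ S`,
`x` adjacent to `y` (the neighbors of `x` are the cells `x + d`, `d ∈ hexDirs`). -/
def extPer (S : Finset (ℤ × ℤ)) : ℕ :=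
  ∑ x ∈ S, (hexDirs.filter (fun d => x + d ∉ S)).card

/-- boundary count in direction d -/
def bd (S : Finset (ℤ × ℤ)) (d : ℤ × ℤ) : ℕ := (S.filter (fun x => x + d ∉ S)).card

lemma extPer_eq_sum (S : Finset (ℤ × ℤ)) : extPer S = ∑ d ∈ hexDirs, bd S d := by
  unfold extPer bd
  simp only [Finset.card_filter]
  exact Finset.sum_comm

lemma extPer_eq_six (S : Finset (ℤ × ℤ)) :
    extPer S = bd S (1,0) + bd S (-1,0) + bd S (0,1) + bd S (0,-1)
      + bd S (1,-1) + bd S (-1,1) := by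
  rw [extPer_eq_sum]
  show ∑ d ∈ insert _ (insert _ (insert _ (insert _ (insert _ {_})))), bd S d = _
  rw [Finset.sum_insert (by decide), Finset.sum_insert (by decide),
    Finset.sum_insert (by decide), Finset.sum_insert (by decide),
    Finset.sum_insert (by decide), Finset.sum_singleton]
  ring

/-- generic per-line lower bound -/
lemma image_card_le_bd (S : Finset (ℤ × ℤ)) (d : ℤ × ℤ) (φ ψ : ℤ × ℤ → ℤ)
    (hφ : ∀ x, φ (x + d) = φ x) (hψ : ∀ x, ψ (x + d) = ψ x + 1) :
    (S.image φ).card ≤ bd S d := by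
  apply Finset.card_le_card_of_surjOn φ
  intro t ht
  simp only [Finset.coe_image, Set.mem_image, Finset.mem_coe] at ht ⊢
  obtain ⟨x, hx, rfl⟩ := ht
  have hfib : (S.filter (fun y => φ y = φ x)).Nonempty := ⟨x, by simp [hx]⟩
  obtain ⟨y, hy, hmax⟩ := Finset.exists_max_image _ ψ hfib
  simp only [Finset.mem_filter] at hy
  refine ⟨y, Finset.mem_filter.2 ⟨hy.1, fun hmem => ?_⟩, hy.2⟩
  have := hmax (y + d) (Finset.mem_filter.2 ⟨hmem, by rw [hφ, hy.2]⟩)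
  rw [hψ] at this
  omega

lemma six_le_extPer_aux (S : Finset (ℤ × ℤ)) :
    2 * ((S.image Prod.fst).card + (S.image Prod.snd).card
      + (S.image (fun x => x.1 + x.2)).card) ≤ extPer S := by
  rw [extPer_eq_six]
  have h1 : (S.image Prod.snd).card ≤ bd S (1,0) :=
    image_card_le_bd S _ _ Prod.fst (by intro x; simp) (by intro x; simp)
  have h2 : (S.image Prod.snd).card ≤ bd S (-1,0) :=
    image_card_le_bd S _ _ (fun x => -x.1) (by intro x; simp) (by intro x; simp; ring)
  have h3 : (S.image Prod.fst).card ≤ bd S (0,1) :=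
    image_card_le_bd S _ _ Prod.snd (by intro x; simp) (by intro x; simp)
  have h4 : (S.image Prod.fst).card ≤ bd S (0,-1) :=
    image_card_le_bd S _ _ (fun x => -x.2) (by intro x; simp) (by intro x; simp; ring)
  have h5 : (S.image (fun x => x.1 + x.2)).card ≤ bd S (1,-1) :=
    image_card_le_bd S _ _ Prod.fst (by intro x; simp; ring) (by intro x; simp)
  have h6 : (S.image (fun x => x.1 + x.2)).card ≤ bd S (-1,1) :=
    image_card_le_bd S _ _ (fun x => -x.1) (by intro x; simp; ring) (by intro x; simp; ring)
  omega

lemma adj_cases {a b : ℤ × ℤ} (h : hexGraph.Adj a b) :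
    (a.1 - b.1 = 1 ∧ a.2 - b.2 = 0) ∨ (a.1 - b.1 = -1 ∧ a.2 - b.2 = 0) ∨
    (a.1 - b.1 = 0 ∧ a.2 - b.2 = 1) ∨ (a.1 - b.1 = 0 ∧ a.2 - b.2 = -1) ∨
    (a.1 - b.1 = 1 ∧ a.2 - b.2 = -1) ∨ (a.1 - b.1 = -1 ∧ a.2 - b.2 = 1) := by
  have : a - b ∈ hexDirs := h
  simpa [hexDirs, Prod.ext_iff] using this

def stepIn (S : Finset (ℤ × ℤ)) (x y : ℤ × ℤ) : Prop :=
  x ∈ S ∧ y ∈ S ∧ hexGraph.Adj x y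

def reachIn (S : Finset (ℤ × ℤ)) : ℤ × ℤ → ℤ × ℤ → Prop :=
  Relation.ReflTransGen (stepIn S)

lemma reachIn_symm {S : Finset (ℤ × ℤ)} {x y : ℤ × ℤ} (h : reachIn S x y) :
    reachIn S y x :=
  (@Relation.ReflTransGen.symmetric _ (stepIn S)
    ⟨fun _ _ hab => ⟨hab.2.1, hab.1, hab.2.2.symm⟩⟩).symm _ _ h

def connIn (S : Finset (ℤ × ℤ)) : Prop := ∀ x ∈ S, ∀ y ∈ S, reachIn S x y

open Classical in
noncomputable def compIn (S : Finset (ℤ × ℤ)) (x : ℤ × ℤ) : Finset (ℤ × ℤ) :=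
  S.filter (fun y => reachIn S x y)

lemma mem_compIn {S : Finset (ℤ × ℤ)} {x y : ℤ × ℤ} :
    y ∈ compIn S x ↔ y ∈ S ∧ reachIn S x y := by
  simp [compIn]

lemma compIn_subset {S : Finset (ℤ × ℤ)} {x : ℤ × ℤ} : compIn S x ⊆ S := by
  intro y hy; exact (mem_compIn.1 hy).1

lemma mem_compIn_self {S : Finset (ℤ × ℤ)} {x : ℤ × ℤ} (hx : x ∈ S) : x ∈ compIn S x :=
  mem_compIn.2 ⟨hx, Relation.ReflTransGen.refl⟩

lemma compIn_closed {S : Finset (ℤ × ℤ)} {x y z : ℤ × ℤ} (hy : y ∈ compIn S x)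
    (hz : z ∈ S) (hadj : hexGraph.Adj y z) : z ∈ compIn S x := by
  rw [mem_compIn] at hy ⊢
  exact ⟨hz, hy.2.tail ⟨hy.1, hz, hadj⟩⟩

lemma adj_add {x : ℤ × ℤ} {d : ℤ × ℤ} (hd : d ∈ hexDirs) : hexGraph.Adj x (x + d) := by
  show x - (x + d) ∈ hexDirs
  rw [show x - (x + d) = -d by ring]
  exact neg_mem_hexDirs hd

lemma extPer_split {S : Finset (ℤ × ℤ)} {C : Finset (ℤ × ℤ)} (hCS : C ⊆ S)
    (hcl : ∀ y ∈ C, ∀ z ∈ S, hexGraph.Adj y z → z ∈ C) :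
    extPer S = extPer C + extPer (S \ C) := by
  unfold extPer
  have hsum : ∑ x ∈ S, (hexDirs.filter (fun d => x + d ∉ S)).card
      = ∑ x ∈ C, (hexDirs.filter (fun d => x + d ∉ S)).card
        + ∑ x ∈ S \ C, (hexDirs.filter (fun d => x + d ∉ S)).card := by
    rw [← Finset.sum_union Finset.disjoint_sdiff, Finset.union_sdiff_of_subset hCS]
  rw [hsum]
  congr 1
  · apply Finset.sum_congr rfl
    intro x hx
    congr 1
    apply Finset.filter_congr
    intro d _
    constructor
    · intro h hxC; exact h (hCS hxC)
    · intro h hxS; exact h (hcl x hx _ hxS (adj_add ‹d ∈ hexDirs›))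
  · apply Finset.sum_congr rfl
    intro x hx
    rw [Finset.mem_sdiff] at hx
    congr 1
    apply Finset.filter_congr
    intro d _
    constructor
    · intro h hxSC; exact h (Finset.mem_sdiff.1 hxSC).1
    · intro h hxS
      apply h
      rw [Finset.mem_sdiff]
      refine ⟨hxS, fun hxC => ?_⟩
      exact absurd (hcl _ hxC x hx.1 (adj_add ‹d ∈ hexDirs›).symm) hx.2

lemma connIn_compIn {S : Finset (ℤ × ℤ)} {x : ℤ × ℤ} :
    connIn (compIn S x) := by
  have key : ∀ y ∈ compIn S x, reachIn (compIn S x) x y := by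
    intro y hy
    have h := (mem_compIn.1 hy).2
    clear hy
    induction h with
    | refl => exact Relation.ReflTransGen.refl
    | @tail b c hb hbc ih =>
      have hbcomp : b ∈ compIn S x := mem_compIn.2 ⟨hbc.1, hb⟩
      have hccomp : c ∈ compIn S x := compIn_closed hbcomp hbc.2.1 hbc.2.2
      exact (ih).tail ⟨hbcomp, hccomp, hbc.2.2⟩
  intro y hy z hz
  exact (reachIn_symm (key y hy)).trans (key z hz)

lemma reach_ivt {S : Finset (ℤ × ℤ)} (f : ℤ × ℤ → ℤ)
    (hf : ∀ a b : ℤ × ℤ, hexGraph.Adj a b → f b ≤ f a + 1)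
    {y z : ℤ × ℤ} (hy : y ∈ S) (h : reachIn S y z) :
    ∀ c : ℤ, f y ≤ c → c ≤ f z → ∃ w ∈ S, f w = c := by
  induction h with
  | refl => intro c h1 h2; exact ⟨y, hy, le_antisymm h1 h2 ▸ rfl⟩
  | @tail b z hb hbz ih =>
    intro c h1 h2
    by_cases hc : c ≤ f b
    · exact ih c h1 hc
    · have := hf b z hbz.2.2
      exact ⟨z, hbz.2.1, by omega⟩

lemma image_interval {S : Finset (ℤ × ℤ)} (hconn : connIn S) (f : ℤ × ℤ → ℤ)
    (hf : ∀ a b : ℤ × ℤ, hexGraph.Adj a b → f b ≤ f a + 1)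
    {y z : ℤ × ℤ} (hy : y ∈ S) (hz : z ∈ S) :
    ∀ c : ℤ, f y ≤ c → c ≤ f z → ∃ w ∈ S, f w = c :=
  reach_ivt f hf hy (hconn y hy z hz)

lemma lip_fst : ∀ a b : ℤ × ℤ, hexGraph.Adj a b → b.1 ≤ a.1 + 1 := by
  intro a b h
  rcases adj_cases h with h' | h' | h' | h' | h' | h' <;> omega

lemma lip_snd : ∀ a b : ℤ × ℤ, hexGraph.Adj a b → b.2 ≤ a.2 + 1 := by
  intro a b h
  rcases adj_cases h with h' | h' | h' | h' | h' | h' <;> omega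

lemma lip_sum : ∀ a b : ℤ × ℤ, hexGraph.Adj a b → b.1 + b.2 ≤ a.1 + a.2 + 1 := by
  intro a b h
  rcases adj_cases h with h' | h' | h' | h' | h' | h' <;> omega

noncomputable def boxF (a₁ a₂ b₁ b₂ : ℤ) : Finset (ℤ × ℤ) := Finset.Icc a₁ a₂ ×ˢ Finset.Icc b₁ b₂

noncomputable def hexF (a₁ a₂ b₁ b₂ c₁ c₂ : ℤ) : Finset (ℤ × ℤ) :=
  (boxF a₁ a₂ b₁ b₂).filter (fun x => c₁ ≤ x.1 + x.2 ∧ x.1 + x.2 ≤ c₂)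

lemma mem_hexF {a₁ a₂ b₁ b₂ c₁ c₂ : ℤ} {x : ℤ × ℤ} :
    x ∈ hexF a₁ a₂ b₁ b₂ c₁ c₂ ↔
      a₁ ≤ x.1 ∧ x.1 ≤ a₂ ∧ b₁ ≤ x.2 ∧ x.2 ≤ b₂ ∧ c₁ ≤ x.1 + x.2 ∧ x.1 + x.2 ≤ c₂ := by
  simp [hexF, boxF, Finset.mem_filter, Finset.mem_product, Finset.mem_Icc]
  tauto

/-- count of a diagonal inside a box -/
lemma diag_card (a₁ a₂ b₁ b₂ w : ℤ) :
    ((boxF a₁ a₂ b₁ b₂).filter (fun x => x.1 + x.2 = w)).card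
      = (Finset.Icc (max a₁ (w - b₂)) (min a₂ (w - b₁))).card := by
  have himg : (boxF a₁ a₂ b₁ b₂).filter (fun x => x.1 + x.2 = w)
      = (Finset.Icc (max a₁ (w - b₂)) (min a₂ (w - b₁))).image (fun a => (a, w - a)) := by
    ext x
    simp only [Finset.mem_filter, Finset.mem_image, Finset.mem_Icc, boxF,
      Finset.mem_product, le_max_iff, max_le_iff, le_min_iff, min_le_iff, Prod.ext_iff]
    constructor
    · rintro ⟨⟨⟨h1, h2⟩, ⟨h3, h4⟩⟩, h5⟩
      exact ⟨x.1, by omega⟩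
    · rintro ⟨a, ⟨ha1, ha2⟩, h1, h2⟩
      refine ⟨⟨⟨by omega, by omega⟩, ⟨by omega, by omega⟩⟩, by omega⟩
  rw [himg, Finset.card_image_of_injective]
  intro a b hab
  exact (Prod.ext_iff.1 hab).1

lemma lowcut_card (a₁ a₂ b₁ b₂ : ℤ) (ha : a₁ ≤ a₂) (hb : b₁ ≤ b₂) :
    ∀ k : ℕ, (k : ℤ) ≤ a₂ - a₁ + 1 → (k : ℤ) ≤ b₂ - b₁ + 1 →
      2 * (((boxF a₁ a₂ b₁ b₂).filter (fun x => x.1 + x.2 < a₁ + b₁ + (k : ℤ))).card : ℤ)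
        = (k : ℤ) * ((k : ℤ) + 1) := by
  intro k
  induction k with
  | zero =>
    intro _ _
    have : (boxF a₁ a₂ b₁ b₂).filter (fun x => x.1 + x.2 < a₁ + b₁ + ((0:ℕ) : ℤ)) = ∅ := by
      apply Finset.filter_false_of_mem
      intro x hx
      simp only [boxF, Finset.mem_product, Finset.mem_Icc] at hx
      push_cast
      omega
    rw [this]; simp
  | succ k ih =>
    intro hka hkb
    push_cast at hka hkb ⊢
    have hsplit : (boxF a₁ a₂ b₁ b₂).filter (fun x => x.1 + x.2 < a₁ + b₁ + ((k:ℤ) + 1))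
        = (boxF a₁ a₂ b₁ b₂).filter (fun x => x.1 + x.2 < a₁ + b₁ + (k:ℤ))
          ∪ (boxF a₁ a₂ b₁ b₂).filter (fun x => x.1 + x.2 = a₁ + b₁ + (k:ℤ)) := by
      rw [← Finset.filter_or]
      apply Finset.filter_congr
      intro x _
      constructor
      · intro h; omega
      · intro h; omega
    have hdisj : Disjoint ((boxF a₁ a₂ b₁ b₂).filter (fun x => x.1 + x.2 < a₁ + b₁ + (k:ℤ)))
        ((boxF a₁ a₂ b₁ b₂).filter (fun x => x.1 + x.2 = a₁ + b₁ + (k:ℤ))) := by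
      apply Finset.disjoint_filter_filter'
      rw [disjoint_iff_inf_le]
      intro x hx
      simp only [Pi.inf_apply, inf_Prop_eq] at hx
      omega
    have hdiag : (((boxF a₁ a₂ b₁ b₂).filter (fun x => x.1 + x.2 = a₁ + b₁ + (k:ℤ))).card : ℤ)
        = (k : ℤ) + 1 := by
      rw [diag_card]
      have hmax : max a₁ (a₁ + b₁ + (k:ℤ) - b₂) = a₁ := by omega
      have hmin : min a₂ (a₁ + b₁ + (k:ℤ) - b₁) = a₁ + (k:ℤ) := by omega
      rw [hmax, hmin, Int.card_Icc]
      rw [show a₁ + (k:ℤ) + 1 - a₁ = (k:ℤ) + 1 by ring]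
      exact Int.toNat_of_nonneg (by positivity)
    have hih := ih (by omega) (by omega)
    rw [hsplit, Finset.card_union_of_disjoint hdisj]
    push_cast
    rw [hdiag]
    linear_combination hih

lemma box_card (a₁ a₂ b₁ b₂ : ℤ) (ha : a₁ ≤ a₂) (hb : b₁ ≤ b₂) :
    ((boxF a₁ a₂ b₁ b₂).card : ℤ) = (a₂ - a₁ + 1) * (b₂ - b₁ + 1) := by
  rw [boxF, Finset.card_product, Int.card_Icc, Int.card_Icc]
  push_cast [Int.toNat_of_nonneg (by omega : (0:ℤ) ≤ a₂ + 1 - a₁),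
    Int.toNat_of_nonneg (by omega : (0:ℤ) ≤ b₂ + 1 - b₁)]
  ring

/-- reflect bijection: count of high cut = count of corresponding low cut -/
lemma highcut_card (a₁ a₂ b₁ b₂ c₂ : ℤ) :
    (((boxF a₁ a₂ b₁ b₂).filter (fun x => c₂ < x.1 + x.2)).card : ℤ)
      = (((boxF a₁ a₂ b₁ b₂).filter
          (fun x => x.1 + x.2 < a₁ + b₁ + (a₂ + b₂ - c₂))).card : ℤ) := by
  norm_cast
  apply Finset.card_bij (fun x _ => (a₁ + a₂ - x.1, b₁ + b₂ - x.2))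
  · intro x hx
    simp only [Finset.mem_filter, boxF, Finset.mem_product, Finset.mem_Icc] at hx ⊢
    omega
  · intro x hx y hy hxy
    simp only [Prod.ext_iff] at hxy
    obtain ⟨h1, h2⟩ := hxy
    ext <;> omega
  · intro y hy
    refine ⟨(a₁ + a₂ - y.1, b₁ + b₂ - y.2), ?_, ?_⟩
    · simp only [Finset.mem_filter, boxF, Finset.mem_product, Finset.mem_Icc] at hy ⊢
      omega
    · ext <;> simp

lemma hex_card_direct (a₁ a₂ b₁ b₂ c₁ c₂ : ℤ) (ha : a₁ ≤ a₂) (hb : b₁ ≤ b₂)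
    (h1 : a₁ + b₁ ≤ c₁) (h2 : c₂ ≤ a₂ + b₂)
    (hrp : a₂ - a₁ ≤ c₂ - c₁) (hrq : b₂ - b₁ ≤ c₂ - c₁) :
    2 * ((hexF a₁ a₂ b₁ b₂ c₁ c₂).card : ℤ)
      = 2 * (a₂ - a₁ + 1) * (b₂ - b₁ + 1)
        - (c₁ - a₁ - b₁) * (c₁ - a₁ - b₁ + 1)
        - (a₂ + b₂ - c₂) * (a₂ + b₂ - c₂ + 1) := by
  have hc : c₁ ≤ c₂ := by omega
  -- split the box
  have hbox : ((boxF a₁ a₂ b₁ b₂).filter (fun x => c₁ ≤ x.1 + x.2 ∧ x.1 + x.2 ≤ c₂)).card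
      + ((boxF a₁ a₂ b₁ b₂).filter (fun x => ¬(c₁ ≤ x.1 + x.2 ∧ x.1 + x.2 ≤ c₂))).card
      = (boxF a₁ a₂ b₁ b₂).card :=
    Finset.card_filter_add_card_filter_not _
  have hnegsplit : (boxF a₁ a₂ b₁ b₂).filter (fun x => ¬(c₁ ≤ x.1 + x.2 ∧ x.1 + x.2 ≤ c₂))
      = (boxF a₁ a₂ b₁ b₂).filter (fun x => x.1 + x.2 < c₁)
        ∪ (boxF a₁ a₂ b₁ b₂).filter (fun x => c₂ < x.1 + x.2) := by
    rw [← Finset.filter_or]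
    apply Finset.filter_congr
    intro x _
    constructor
    · intro h; omega
    · intro h; omega
  have hdisj : Disjoint ((boxF a₁ a₂ b₁ b₂).filter (fun x => x.1 + x.2 < c₁))
      ((boxF a₁ a₂ b₁ b₂).filter (fun x => c₂ < x.1 + x.2)) := by
    apply Finset.disjoint_filter_filter'
    rw [disjoint_iff_inf_le]
    intro x hx
    simp only [Pi.inf_apply, inf_Prop_eq] at hx
    omega
  have hlow : 2 * (((boxF a₁ a₂ b₁ b₂).filter (fun x => x.1 + x.2 < c₁)).card : ℤ)
      = (c₁ - a₁ - b₁) * (c₁ - a₁ - b₁ + 1) := by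
    have hk : (((c₁ - a₁ - b₁).toNat : ℤ)) = c₁ - a₁ - b₁ := Int.toNat_of_nonneg (by omega)
    have := lowcut_card a₁ a₂ b₁ b₂ ha hb (c₁ - a₁ - b₁).toNat (by omega) (by omega)
    rw [hk, show a₁ + b₁ + (c₁ - a₁ - b₁) = c₁ from by ring] at this
    exact this
  have hhigh : 2 * (((boxF a₁ a₂ b₁ b₂).filter (fun x => c₂ < x.1 + x.2)).card : ℤ)
      = (a₂ + b₂ - c₂) * (a₂ + b₂ - c₂ + 1) := by
    rw [highcut_card a₁ a₂ b₁ b₂ c₂]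
    have hk : (((a₂ + b₂ - c₂).toNat : ℤ)) = a₂ + b₂ - c₂ := Int.toNat_of_nonneg (by omega)
    have := lowcut_card a₁ a₂ b₁ b₂ ha hb (a₂ + b₂ - c₂).toNat (by omega) (by omega)
    rw [hk] at this
    rw [this]
  have hboxc := box_card a₁ a₂ b₁ b₂ ha hb
  rw [hnegsplit, Finset.card_union_of_disjoint hdisj] at hbox
  have hhex : (hexF a₁ a₂ b₁ b₂ c₁ c₂).card
      = ((boxF a₁ a₂ b₁ b₂).filter (fun x => c₁ ≤ x.1 + x.2 ∧ x.1 + x.2 ≤ c₂)).card := rfl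
  have hboxz : (((boxF a₁ a₂ b₁ b₂).filter (fun x => c₁ ≤ x.1 + x.2 ∧ x.1 + x.2 ≤ c₂)).card : ℤ)
      + (((boxF a₁ a₂ b₁ b₂).filter (fun x => x.1 + x.2 < c₁)).card : ℤ)
      + (((boxF a₁ a₂ b₁ b₂).filter (fun x => c₂ < x.1 + x.2)).card : ℤ)
      = (a₂ - a₁ + 1) * (b₂ - b₁ + 1) := by
    rw [← hboxc]
    norm_cast
    omega
  rw [hhex]
  linarith [hboxz, hlow, hhigh]

lemma hex_master_aux (a₁ a₂ b₁ b₂ c₁ c₂ : ℤ) (ha : a₁ ≤ a₂) (hb : b₁ ≤ b₂)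
    (h1 : a₁ + b₁ ≤ c₁) (h2 : c₂ ≤ a₂ + b₂)
    (hrp : a₂ - a₁ ≤ c₂ - c₁) (hrq : b₂ - b₁ ≤ c₂ - c₁) :
    12 * ((hexF a₁ a₂ b₁ b₂ c₁ c₂).card : ℤ)
      ≤ ((a₂ - a₁ + 1) + (b₂ - b₁ + 1) + (c₂ - c₁ + 1)) ^ 2 + 3 ∧
    (12 * ((hexF a₁ a₂ b₁ b₂ c₁ c₂).card : ℤ)
        = ((a₂ - a₁ + 1) + (b₂ - b₁ + 1) + (c₂ - c₁ + 1)) ^ 2 + 3 →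
      a₂ - a₁ = b₂ - b₁ ∧ b₂ - b₁ = c₂ - c₁) := by
  have hcard := hex_card_direct a₁ a₂ b₁ b₂ c₁ c₂ ha hb h1 h2 hrp hrq
  set N := ((hexF a₁ a₂ b₁ b₂ c₁ c₂).card : ℤ) with hN
  have hid : ((a₂ - a₁ + 1) + (b₂ - b₁ + 1) + (c₂ - c₁ + 1)) ^ 2 + 3 - 12 * N
      = 3 * ((a₂ - a₁) - (b₂ - b₁)) ^ 2
        + ((a₂ - a₁) + (b₂ - b₁) - 2 * ((c₁ - a₁ - b₁) + (a₂ + b₂ - c₂))) ^ 2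
        + 3 * ((c₁ - a₁ - b₁) - (a₂ + b₂ - c₂)) ^ 2 := by
    linear_combination (-6 : ℤ) * hcard
  have s1 := sq_nonneg ((a₂ - a₁) - (b₂ - b₁))
  have s2 := sq_nonneg ((a₂ - a₁) + (b₂ - b₁) - 2 * ((c₁ - a₁ - b₁) + (a₂ + b₂ - c₂)))
  have s3 := sq_nonneg ((c₁ - a₁ - b₁) - (a₂ + b₂ - c₂))
  constructor
  · linarith
  · intro heq
    rw [heq] at hid
    have e1 : ((a₂ - a₁) - (b₂ - b₁)) ^ 2 = 0 := by linarith
    have e2 : ((a₂ - a₁) + (b₂ - b₁) - 2 * ((c₁ - a₁ - b₁) + (a₂ + b₂ - c₂))) ^ 2 = 0 := by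
      linarith
    have f1 : (a₂ - a₁) - (b₂ - b₁) = 0 := by
      exact pow_eq_zero_iff (by norm_num) |>.1 e1
    have f2 : (a₂ - a₁) + (b₂ - b₁) - 2 * ((c₁ - a₁ - b₁) + (a₂ + b₂ - c₂)) = 0 := by
      exact pow_eq_zero_iff (by norm_num) |>.1 e2
    omega

lemma hex_swap_card (a₁ a₂ b₁ b₂ c₁ c₂ : ℤ) :
    (hexF a₁ a₂ b₁ b₂ c₁ c₂).card = (hexF b₁ b₂ a₁ a₂ c₁ c₂).card := by
  apply Finset.card_bij (fun x _ => (x.2, x.1))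
  · intro x hx
    rw [mem_hexF] at hx ⊢
    dsimp
    omega
  · intro x hx y hy hxy
    simp only [Prod.ext_iff] at hxy ⊢
    exact ⟨hxy.2, hxy.1⟩
  · intro y hy
    refine ⟨(y.2, y.1), ?_, rfl⟩
    rw [mem_hexF] at hy ⊢
    dsimp
    omega

lemma hex_rot_card (a₁ a₂ b₁ b₂ c₁ c₂ : ℤ) :
    (hexF a₁ a₂ b₁ b₂ c₁ c₂).card = (hexF c₁ c₂ (-b₂) (-b₁) a₁ a₂).card := by
  apply Finset.card_bij (fun x _ => (x.1 + x.2, -x.2))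
  · intro x hx
    rw [mem_hexF] at hx ⊢
    dsimp
    omega
  · intro x hx y hy hxy
    simp only [Prod.ext_iff] at hxy ⊢
    constructor <;> omega
  · intro y hy
    refine ⟨(y.1 + y.2, -y.2), ?_, ?_⟩
    · rw [mem_hexF] at hy ⊢
      dsimp
      omega
    · simp only [Prod.ext_iff]
      constructor <;> ring

lemma hex_master (a₁ a₂ b₁ b₂ c₁ c₂ : ℤ) (ha : a₁ ≤ a₂) (hb : b₁ ≤ b₂) (hc : c₁ ≤ c₂)
    (h1 : a₁ + b₁ ≤ c₁) (h2 : c₂ ≤ a₂ + b₂) (h3 : c₁ ≤ a₂ + b₁) (h4 : c₁ ≤ a₁ + b₂)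
    (h5 : a₂ + b₁ ≤ c₂) (h6 : a₁ + b₂ ≤ c₂) :
    12 * ((hexF a₁ a₂ b₁ b₂ c₁ c₂).card : ℤ)
      ≤ ((a₂ - a₁ + 1) + (b₂ - b₁ + 1) + (c₂ - c₁ + 1)) ^ 2 + 3 ∧
    (12 * ((hexF a₁ a₂ b₁ b₂ c₁ c₂).card : ℤ)
        = ((a₂ - a₁ + 1) + (b₂ - b₁ + 1) + (c₂ - c₁ + 1)) ^ 2 + 3 →
      a₂ - a₁ = b₂ - b₁ ∧ b₂ - b₁ = c₂ - c₁) := by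
  by_cases hrp : a₂ - a₁ ≤ c₂ - c₁
  · by_cases hrq : b₂ - b₁ ≤ c₂ - c₁
    · exact hex_master_aux a₁ a₂ b₁ b₂ c₁ c₂ ha hb h1 h2 hrp hrq
    · -- q is the max : q > r ≥ p
      have haux := hex_master_aux c₁ c₂ (-a₂) (-a₁) b₁ b₂ hc (by omega) (by omega) (by omega)
        (by omega) (by omega)
      rw [hex_swap_card a₁ a₂ b₁ b₂ c₁ c₂, hex_rot_card b₁ b₂ a₁ a₂ c₁ c₂]
      have heq : ((c₂ - c₁ + 1) + ((-a₁) - (-a₂) + 1) + (b₂ - b₁ + 1)) ^ 2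
          = ((a₂ - a₁ + 1) + (b₂ - b₁ + 1) + (c₂ - c₁ + 1)) ^ 2 := by ring
      rw [heq] at haux
      exact ⟨haux.1, fun h => by have := haux.2 h; omega⟩
  · -- p is the max : p > r, p ≥ q not known; still p > r and need p ≥ q?
    by_cases hpq : b₂ - b₁ ≤ a₂ - a₁
    · have haux := hex_master_aux c₁ c₂ (-b₂) (-b₁) a₁ a₂ hc (by omega) (by omega) (by omega)
        (by omega) (by omega)
      rw [hex_rot_card a₁ a₂ b₁ b₂ c₁ c₂]
      have heq : ((c₂ - c₁ + 1) + ((-b₁) - (-b₂) + 1) + (a₂ - a₁ + 1)) ^ 2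
          = ((a₂ - a₁ + 1) + (b₂ - b₁ + 1) + (c₂ - c₁ + 1)) ^ 2 := by ring
      rw [heq] at haux
      exact ⟨haux.1, fun h => by have := haux.2 h; omega⟩
    · -- q > p > r : q is max
      have haux := hex_master_aux c₁ c₂ (-a₂) (-a₁) b₁ b₂ hc (by omega) (by omega) (by omega)
        (by omega) (by omega)
      rw [hex_swap_card a₁ a₂ b₁ b₂ c₁ c₂, hex_rot_card b₁ b₂ a₁ a₂ c₁ c₂]
      have heq : ((c₂ - c₁ + 1) + ((-a₁) - (-a₂) + 1) + (b₂ - b₁ + 1)) ^ 2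
          = ((a₂ - a₁ + 1) + (b₂ - b₁ + 1) + (c₂ - c₁ + 1)) ^ 2 := by ring
      rw [heq] at haux
      exact ⟨haux.1, fun h => by have := haux.2 h; omega⟩

/-- hex distance from origin -/
def hdistN (z : ℤ × ℤ) : ℕ := (z.1.natAbs + z.2.natAbs + (z.1 + z.2).natAbs) / 2

lemma hdistN_eq_zero {z : ℤ × ℤ} (h : hdistN z = 0) : z = 0 := by
  unfold hdistN at h
  have h1 : z.1 = 0 ∧ z.2 = 0 := by omega
  ext <;> simp [h1.1, h1.2]

lemma exists_step (z : ℤ × ℤ) (hz : z ≠ 0) :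
    ∃ d ∈ hexDirs, hdistN (z - d) + 1 = hdistN z := by
  have hz' : ¬(z.1 = 0 ∧ z.2 = 0) := by
    intro h; exact hz (by ext <;> simp [h.1, h.2])
  have hsub : ∀ d : ℤ × ℤ, (z - d).1 = z.1 - d.1 ∧ (z - d).2 = z.2 - d.2 := by
    intro d; exact ⟨rfl, rfl⟩
  by_cases h1 : 0 ≤ z.1 ∧ 0 ≤ z.2
  · by_cases h1a : 0 < z.1
    · exact ⟨(1,0), by decide, by unfold hdistN; simp; omega⟩
    · exact ⟨(0,1), by decide, by unfold hdistN; simp; omega⟩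
  · by_cases h2 : z.1 ≤ 0 ∧ z.2 ≤ 0
    · by_cases h2a : z.1 < 0
      · exact ⟨(-1,0), by decide, by unfold hdistN; simp; omega⟩
      · exact ⟨(0,-1), by decide, by unfold hdistN; simp; omega⟩
    · by_cases h3 : 0 < z.1
      · -- z.1 > 0, z.2 < 0
        by_cases h3a : 0 < z.1 + z.2
        · exact ⟨(1,0), by decide, by unfold hdistN; simp; omega⟩
        · by_cases h3b : z.1 + z.2 < 0
          · exact ⟨(0,-1), by decide, by unfold hdistN; simp; omega⟩
          · exact ⟨(1,-1), by decide, by unfold hdistN; simp; omega⟩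
      · -- z.1 < 0, z.2 > 0
        by_cases h4a : z.1 + z.2 < 0
        · exact ⟨(-1,0), by decide, by unfold hdistN; simp; omega⟩
        · by_cases h4b : 0 < z.1 + z.2
          · exact ⟨(0,1), by decide, by unfold hdistN; simp; omega⟩
          · exact ⟨(-1,1), by decide, by unfold hdistN; simp; omega⟩

lemma exists_walk_hdist : ∀ (n : ℕ) (x y : ℤ × ℤ), hdistN (y - x) ≤ n →
    ∃ w : hexGraph.Walk x y, w.length ≤ n := by
  intro n
  induction n with
  | zero =>
    intro x y h
    have : y - x = 0 := hdistN_eq_zero (by omega)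
    have hyx : y = x := by
      have := sub_eq_zero.1 this; exact this
    subst hyx
    exact ⟨SimpleGraph.Walk.nil, by simp⟩
  | succ n ih =>
    intro x y h
    by_cases hxy : y = x
    · subst hxy; exact ⟨SimpleGraph.Walk.nil, by simp⟩
    · obtain ⟨d, hd, hstep⟩ := exists_step (y - x) (fun hc => hxy (sub_eq_zero.1 hc))
      have hrw : y - x - d = (y - d) - x := by ring
      rw [hrw] at hstep
      obtain ⟨w, hw⟩ := ih x (y - d) (by omega)
      have hadj : hexGraph.Adj (y - d) y := by
        show (y - d) - y ∈ hexDirs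
        rw [show (y - d) - y = -d by ring]
        exact neg_mem_hexDirs hd
      exact ⟨w.concat hadj, by rw [SimpleGraph.Walk.length_concat]; omega⟩

lemma walk_lower {x y : ℤ × ℤ} (w : hexGraph.Walk x y) : hdistN (y - x) ≤ w.length := by
  induction w with
  | nil => simp [hdistN]
  | @cons a b c h p ih =>
    rw [SimpleGraph.Walk.length_cons]
    have hc := adj_cases h
    have hstep : hdistN (c - a) ≤ hdistN (c - b) + 1 := by
      unfold hdistN
      simp only [Prod.fst_sub, Prod.snd_sub]
      omega
    omega

lemma hexGraph_dist_eq (x y : ℤ × ℤ) : hexGraph.dist x y = hdistN (y - x) := by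
  apply le_antisymm
  · obtain ⟨w, hw⟩ := exists_walk_hdist (hdistN (y - x)) x y le_rfl
    exact le_trans (SimpleGraph.dist_le w) hw
  · obtain ⟨w, hw⟩ := (by
      obtain ⟨w, _⟩ := exists_walk_hdist (hdistN (y - x)) x y le_rfl
      exact SimpleGraph.Walk.reachable w : hexGraph.Reachable x y).exists_walk_length_eq_dist
    rw [← hw]
    exact walk_lower w

/-- the hexagonal ball as a Finset -/
noncomputable def ballF (c : ℤ × ℤ) (R : ℕ) : Finset (ℤ × ℤ) :=
  hexF (c.1 - R) (c.1 + R) (c.2 - R) (c.2 + R) (c.1 + c.2 - R) (c.1 + c.2 + R)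

lemma mem_ballF {c : ℤ × ℤ} {R : ℕ} {x : ℤ × ℤ} :
    x ∈ ballF c R ↔ hdistN (x - c) ≤ R := by
  rw [ballF, mem_hexF]
  unfold hdistN
  simp only [Prod.fst_sub, Prod.snd_sub]
  omega

lemma coe_ballF (c : ℤ × ℤ) (R : ℕ) :
    (ballF c R : Set (ℤ × ℤ)) = {x | hexGraph.dist c x ≤ R} := by
  ext x
  simp only [Finset.mem_coe, Set.mem_setOf_eq, mem_ballF, hexGraph_dist_eq]

lemma ballF_card (c : ℤ × ℤ) (R : ℕ) : (ballF c R).card = 3 * R ^ 2 + 3 * R + 1 := by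
  have h := hex_card_direct (c.1 - R) (c.1 + R) (c.2 - R) (c.2 + R)
    (c.1 + c.2 - R) (c.1 + c.2 + R) (by omega) (by omega) (by omega) (by omega)
    (by omega) (by omega)
  rw [ballF]
  have : 2 * (((hexF (c.1 - R) (c.1 + R) (c.2 - R) (c.2 + R)
      (c.1 + c.2 - R) (c.1 + c.2 + R)).card : ℤ)) = 2 * (3 * (R:ℤ) ^ 2 + 3 * R + 1) := by
    rw [h]; ring
  have h2 : (((hexF (c.1 - R) (c.1 + R) (c.2 - R) (c.2 + R)
      (c.1 + c.2 - R) (c.1 + c.2 + R)).card : ℤ)) = 3 * (R:ℤ) ^ 2 + 3 * R + 1 := by omega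
  exact_mod_cast h2

/-- injectivity of line functionals on the boundary of a ball gives exact bd counts -/
lemma bd_le_image_card (S : Finset (ℤ × ℤ)) (d : ℤ × ℤ) (φ : ℤ × ℤ → ℤ)
    (hinj : ∀ x ∈ S, ∀ y ∈ S, x + d ∉ S → y + d ∉ S → φ x = φ y → x = y) :
    bd S d ≤ (S.image φ).card := by
  apply Finset.card_le_card_of_injOn φ
  · intro x hx
    rw [Finset.mem_coe, Finset.mem_filter] at hx
    exact Finset.mem_image_of_mem φ hx.1
  · intro x hx y hy hxy
    simp only [Finset.coe_filter, Set.mem_setOf_eq] at hx hy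
    exact hinj x hx.1 y hy.1 hx.2 hy.2 hxy

lemma ballF_image_fst (c : ℤ × ℤ) (R : ℕ) :
    (ballF c R).image Prod.fst = Finset.Icc (c.1 - R) (c.1 + R) := by
  ext t
  simp only [Finset.mem_image, Finset.mem_Icc]
  constructor
  · rintro ⟨x, hx, rfl⟩
    rw [ballF, mem_hexF] at hx
    omega
  · intro ht
    refine ⟨(t, c.1 + c.2 - t), ?_, rfl⟩
    rw [ballF, mem_hexF]
    dsimp
    omega

lemma ballF_image_snd (c : ℤ × ℤ) (R : ℕ) :
    (ballF c R).image Prod.snd = Finset.Icc (c.2 - R) (c.2 + R) := by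
  ext t
  simp only [Finset.mem_image, Finset.mem_Icc]
  constructor
  · rintro ⟨x, hx, rfl⟩
    rw [ballF, mem_hexF] at hx
    omega
  · intro ht
    refine ⟨(c.1 + c.2 - t, t), ?_, rfl⟩
    rw [ballF, mem_hexF]
    dsimp
    omega

lemma ballF_image_sum (c : ℤ × ℤ) (R : ℕ) :
    (ballF c R).image (fun x => x.1 + x.2) = Finset.Icc (c.1 + c.2 - R) (c.1 + c.2 + R) := by
  ext t
  simp only [Finset.mem_image, Finset.mem_Icc]
  constructor
  · rintro ⟨x, hx, rfl⟩
    rw [ballF, mem_hexF] at hx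
    omega
  · intro ht
    refine ⟨(t - c.2, c.2), ?_, by dsimp; ring⟩
    rw [ballF, mem_hexF]
    dsimp
    omega

lemma card_Icc_int (lo hi : ℤ) (h : lo ≤ hi) : ((Finset.Icc lo hi).card : ℤ) = hi - lo + 1 := by
  rw [Int.card_Icc]
  omega

lemma ballF_nonempty (c : ℤ × ℤ) (R : ℕ) : (ballF c R).Nonempty := by
  refine ⟨c, ?_⟩
  rw [mem_ballF]
  simp [hdistN]

lemma extPer_ballF (c : ℤ × ℤ) (R : ℕ) : extPer (ballF c R) = 6 * (2 * R + 1) := by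
  have himg1 := ballF_image_fst c R
  have himg2 := ballF_image_snd c R
  have himg3 := ballF_image_sum c R
  have hc1 : ((ballF c R).image Prod.fst).card = 2 * R + 1 := by
    rw [himg1]
    have := card_Icc_int (c.1 - R) (c.1 + R) (by omega)
    omega
  have hc2 : ((ballF c R).image Prod.snd).card = 2 * R + 1 := by
    rw [himg2]
    have := card_Icc_int (c.2 - R) (c.2 + R) (by omega)
    omega
  have hc3 : ((ballF c R).image (fun x => x.1 + x.2)).card = 2 * R + 1 := by
    rw [himg3]
    have := card_Icc_int (c.1 + c.2 - R) (c.1 + c.2 + R) (by omega)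
    omega
  -- upper bounds for each direction
  have hb1 : bd (ballF c R) (1,0) ≤ 2 * R + 1 := by
    rw [← hc2]
    apply bd_le_image_card
    intro x hx y hy hx' hy' hxy
    rw [ballF, mem_hexF] at hx hy
    rw [ballF, mem_hexF] at hx' hy'
    push_neg at hx' hy'
    simp only [Prod.fst_add, Prod.snd_add] at hx' hy'
    have : x.1 = y.1 ∧ x.2 = y.2 := by omega
    exact Prod.ext this.1 this.2
  have hb2 : bd (ballF c R) (-1,0) ≤ 2 * R + 1 := by
    rw [← hc2]
    apply bd_le_image_card
    intro x hx y hy hx' hy' hxy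
    rw [ballF, mem_hexF] at hx hy
    rw [ballF, mem_hexF] at hx' hy'
    push_neg at hx' hy'
    simp only [Prod.fst_add, Prod.snd_add] at hx' hy'
    have : x.1 = y.1 ∧ x.2 = y.2 := by omega
    exact Prod.ext this.1 this.2
  have hb3 : bd (ballF c R) (0,1) ≤ 2 * R + 1 := by
    rw [← hc1]
    apply bd_le_image_card
    intro x hx y hy hx' hy' hxy
    rw [ballF, mem_hexF] at hx hy
    rw [ballF, mem_hexF] at hx' hy'
    push_neg at hx' hy'
    simp only [Prod.fst_add, Prod.snd_add] at hx' hy'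
    have : x.1 = y.1 ∧ x.2 = y.2 := by omega
    exact Prod.ext this.1 this.2
  have hb4 : bd (ballF c R) (0,-1) ≤ 2 * R + 1 := by
    rw [← hc1]
    apply bd_le_image_card
    intro x hx y hy hx' hy' hxy
    rw [ballF, mem_hexF] at hx hy
    rw [ballF, mem_hexF] at hx' hy'
    push_neg at hx' hy'
    simp only [Prod.fst_add, Prod.snd_add] at hx' hy'
    have : x.1 = y.1 ∧ x.2 = y.2 := by omega
    exact Prod.ext this.1 this.2
  have hb5 : bd (ballF c R) (1,-1) ≤ 2 * R + 1 := by
    rw [← hc3]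
    apply bd_le_image_card
    intro x hx y hy hx' hy' hxy
    rw [ballF, mem_hexF] at hx hy
    rw [ballF, mem_hexF] at hx' hy'
    push_neg at hx' hy'
    simp only [Prod.fst_add, Prod.snd_add] at hx' hy'
    have : x.1 = y.1 ∧ x.2 = y.2 := by omega
    exact Prod.ext this.1 this.2
  have hb6 : bd (ballF c R) (-1,1) ≤ 2 * R + 1 := by
    rw [← hc3]
    apply bd_le_image_card
    intro x hx y hy hx' hy' hxy
    rw [ballF, mem_hexF] at hx hy
    rw [ballF, mem_hexF] at hx' hy'
    push_neg at hx' hy'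
    simp only [Prod.fst_add, Prod.snd_add] at hx' hy'
    have : x.1 = y.1 ∧ x.2 = y.2 := by omega
    exact Prod.ext this.1 this.2
  -- lower bounds
  have hlow := six_le_extPer_aux (ballF c R)
  have hl1 : 2 * R + 1 ≤ bd (ballF c R) (1,0) := by
    rw [← hc2]
    exact image_card_le_bd _ _ _ Prod.fst (by intro x; simp) (by intro x; simp)
  have hl2 : 2 * R + 1 ≤ bd (ballF c R) (-1,0) := by
    rw [← hc2]
    exact image_card_le_bd _ _ _ (fun x => -x.1) (by intro x; simp) (by intro x; simp; ring)
  have hl3 : 2 * R + 1 ≤ bd (ballF c R) (0,1) := by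
    rw [← hc1]
    exact image_card_le_bd _ _ _ Prod.snd (by intro x; simp) (by intro x; simp)
  have hl4 : 2 * R + 1 ≤ bd (ballF c R) (0,-1) := by
    rw [← hc1]
    exact image_card_le_bd _ _ _ (fun x => -x.2) (by intro x; simp) (by intro x; simp; ring)
  have hl5 : 2 * R + 1 ≤ bd (ballF c R) (1,-1) := by
    rw [← hc3]
    exact image_card_le_bd _ _ _ Prod.fst (by intro x; simp; ring) (by intro x; simp)
  have hl6 : 2 * R + 1 ≤ bd (ballF c R) (-1,1) := by
    rw [← hc3]
    exact image_card_le_bd _ _ _ (fun x => -x.1) (by intro x; simp; ring) (by intro x; simp; ring)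
  rw [extPer_eq_six]
  omega

lemma conn_hull (S : Finset (ℤ × ℤ)) (hne : S.Nonempty) (hconn : connIn S) :
    ∃ a₁ a₂ b₁ b₂ c₁ c₂ : ℤ,
      a₁ ≤ a₂ ∧ b₁ ≤ b₂ ∧ c₁ ≤ c₂ ∧
      a₁ + b₁ ≤ c₁ ∧ c₂ ≤ a₂ + b₂ ∧ c₁ ≤ a₂ + b₁ ∧ c₁ ≤ a₁ + b₂ ∧
      a₂ + b₁ ≤ c₂ ∧ a₁ + b₂ ≤ c₂ ∧
      S ⊆ hexF a₁ a₂ b₁ b₂ c₁ c₂ ∧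
      ((S.image Prod.fst).card : ℤ) = a₂ - a₁ + 1 ∧
      ((S.image Prod.snd).card : ℤ) = b₂ - b₁ + 1 ∧
      ((S.image (fun x => x.1 + x.2)).card : ℤ) = c₂ - c₁ + 1 := by
  have hne1 : (S.image Prod.fst).Nonempty := hne.image _
  have hne2 : (S.image Prod.snd).Nonempty := hne.image _
  have hne3 : (S.image (fun x : ℤ × ℤ => x.1 + x.2)).Nonempty := hne.image _
  set a₁ := (S.image Prod.fst).min' hne1 with ha₁
  set a₂ := (S.image Prod.fst).max' hne1 with ha₂
  set b₁ := (S.image Prod.snd).min' hne2 with hb₁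
  set b₂ := (S.image Prod.snd).max' hne2 with hb₂
  set c₁ := ((S.image (fun x : ℤ × ℤ => x.1 + x.2))).min' hne3 with hc₁
  set c₂ := ((S.image (fun x : ℤ × ℤ => x.1 + x.2))).max' hne3 with hc₂
  -- witnesses
  obtain ⟨xa1, hxa1S, hxa1⟩ := Finset.mem_image.1 ((S.image Prod.fst).min'_mem hne1)
  obtain ⟨xa2, hxa2S, hxa2⟩ := Finset.mem_image.1 ((S.image Prod.fst).max'_mem hne1)
  obtain ⟨xb1, hxb1S, hxb1⟩ := Finset.mem_image.1 ((S.image Prod.snd).min'_mem hne2)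
  obtain ⟨xb2, hxb2S, hxb2⟩ := Finset.mem_image.1 ((S.image Prod.snd).max'_mem hne2)
  obtain ⟨xc1, hxc1S, hxc1⟩ :=
    Finset.mem_image.1 (((S.image (fun x : ℤ × ℤ => x.1 + x.2))).min'_mem hne3)
  obtain ⟨xc2, hxc2S, hxc2⟩ :=
    Finset.mem_image.1 (((S.image (fun x : ℤ × ℤ => x.1 + x.2))).max'_mem hne3)
  -- bounds for every member
  have hbnd : ∀ x ∈ S, a₁ ≤ x.1 ∧ x.1 ≤ a₂ ∧ b₁ ≤ x.2 ∧ x.2 ≤ b₂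
      ∧ c₁ ≤ x.1 + x.2 ∧ x.1 + x.2 ≤ c₂ := by
    intro x hx
    have g1 : c₁ ≤ (fun x : ℤ × ℤ => x.1 + x.2) x :=
      Finset.min'_le _ _ (Finset.mem_image_of_mem (fun x : ℤ × ℤ => x.1 + x.2) hx)
    have g2 : (fun x : ℤ × ℤ => x.1 + x.2) x ≤ c₂ :=
      Finset.le_max' _ _ (Finset.mem_image_of_mem (fun x : ℤ × ℤ => x.1 + x.2) hx)
    refine ⟨Finset.min'_le _ _ (Finset.mem_image_of_mem _ hx),
      Finset.le_max' _ _ (Finset.mem_image_of_mem _ hx),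
      Finset.min'_le _ _ (Finset.mem_image_of_mem _ hx),
      Finset.le_max' _ _ (Finset.mem_image_of_mem _ hx), g1, g2⟩
  -- intervals
  have hint1 : S.image Prod.fst = Finset.Icc a₁ a₂ := by
    ext t
    simp only [Finset.mem_Icc]
    constructor
    · intro ht
      exact ⟨Finset.min'_le _ _ ht, Finset.le_max' _ _ ht⟩
    · rintro ⟨h1, h2⟩
      obtain ⟨w, hw, hwt⟩ := image_interval hconn Prod.fst lip_fst hxa1S hxa2S t
        (by rw [hxa1]; exact h1) (by rw [hxa2]; exact h2)
      exact Finset.mem_image.2 ⟨w, hw, hwt⟩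
  have hint2 : S.image Prod.snd = Finset.Icc b₁ b₂ := by
    ext t
    simp only [Finset.mem_Icc]
    constructor
    · intro ht
      exact ⟨Finset.min'_le _ _ ht, Finset.le_max' _ _ ht⟩
    · rintro ⟨h1, h2⟩
      obtain ⟨w, hw, hwt⟩ := image_interval hconn Prod.snd lip_snd hxb1S hxb2S t
        (by rw [hxb1]; exact h1) (by rw [hxb2]; exact h2)
      exact Finset.mem_image.2 ⟨w, hw, hwt⟩
  have hint3 : S.image (fun x : ℤ × ℤ => x.1 + x.2) = Finset.Icc c₁ c₂ := by
    ext t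
    simp only [Finset.mem_Icc]
    constructor
    · intro ht
      exact ⟨Finset.min'_le _ _ ht, Finset.le_max' _ _ ht⟩
    · rintro ⟨h1, h2⟩
      obtain ⟨w, hw, hwt⟩ := image_interval hconn (fun x : ℤ × ℤ => x.1 + x.2) lip_sum
        hxc1S hxc2S t (by omega) (by omega)
      exact Finset.mem_image.2 ⟨w, hw, hwt⟩
  have haa : a₁ ≤ a₂ := by
    have := hbnd xa1 hxa1S; omega
  have hbb : b₁ ≤ b₂ := by
    have := hbnd xb1 hxb1S; omega
  have hcc : c₁ ≤ c₂ := by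
    have := hbnd xc1 hxc1S; omega
  refine ⟨a₁, a₂, b₁, b₂, c₁, c₂, haa, hbb, hcc, ?_, ?_, ?_, ?_, ?_, ?_, ?_, ?_, ?_, ?_⟩
  · have h := hbnd xc1 hxc1S; omega
  · have h := hbnd xc2 hxc2S; omega
  · -- c₁ ≤ a₂ + b₁ : use witness of b₁
    have h := hbnd xb1 hxb1S; omega
  · have h := hbnd xa1 hxa1S; omega
  · have h := hbnd xa2 hxa2S; omega
  · have h := hbnd xb2 hxb2S; omega
  · intro x hx
    rw [mem_hexF]
    exact hbnd x hx
  · rw [hint1]; exact card_Icc_int _ _ haa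
  · rw [hint2]; exact card_Icc_int _ _ hbb
  · rw [hint3]; exact card_Icc_int _ _ hcc

lemma conn_analysis (S : Finset (ℤ × ℤ)) (hne : S.Nonempty) (hconn : connIn S) :
    48 * (S.card : ℤ) ≤ (extPer S : ℤ) ^ 2 + 12 ∧
    (∀ R : ℕ, (S.card : ℤ) = 3 * R ^ 2 + 3 * R + 1 → (extPer S : ℤ) = 12 * R + 6 →
      ∃ c : ℤ × ℤ, S = ballF c R) := by
  obtain ⟨a₁, a₂, b₁, b₂, c₁, c₂, haa, hbb, hcc, h1, h2, h3, h4, h5, h6, hsub,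
    hi1, hi2, hi3⟩ := conn_hull S hne hconn
  set P : ℤ := (a₂ - a₁ + 1) + (b₂ - b₁ + 1) + (c₂ - c₁ + 1) with hP
  have hPpos : 3 ≤ P := by omega
  have hext : 2 * P ≤ (extPer S : ℤ) := by
    have := six_le_extPer_aux S
    have hcast : 2 * (((S.image Prod.fst).card : ℤ) + ((S.image Prod.snd).card : ℤ)
        + ((S.image (fun x => x.1 + x.2)).card : ℤ)) ≤ (extPer S : ℤ) := by
      exact_mod_cast this
    rw [hi1, hi2, hi3] at hcast
    omega
  obtain ⟨hmaster, hmeq⟩ := hex_master a₁ a₂ b₁ b₂ c₁ c₂ haa hbb hcc h1 h2 h3 h4 h5 h6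
  have hcardle : (S.card : ℤ) ≤ ((hexF a₁ a₂ b₁ b₂ c₁ c₂).card : ℤ) := by
    exact_mod_cast Finset.card_le_card hsub
  constructor
  · -- 48 card ≤ extPer² + 12
    have h12 : 12 * (S.card : ℤ) ≤ P ^ 2 + 3 := le_trans (by linarith) hmaster
    have hsq : (2 * P) ^ 2 ≤ (extPer S : ℤ) ^ 2 :=
      pow_le_pow_left₀ (by omega) hext 2
    nlinarith
  · intro R hcard hextval
    have hP2 : 2 * P ≤ 12 * R + 6 := by rw [← hextval]; exact hext
    have h12 : 12 * (S.card : ℤ) ≤ P ^ 2 + 3 := le_trans (by linarith) hmaster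
    have hgoal : (6 * (R:ℤ) + 3) ^ 2 + 3 = 12 * (S.card : ℤ) := by rw [hcard]; ring
    have hPge : 6 * (R:ℤ) + 3 ≤ P := by
      by_contra hlt
      push_neg at hlt
      have : P ^ 2 < (6 * (R:ℤ) + 3) ^ 2 := pow_lt_pow_left₀ hlt (by omega) (by norm_num)
      linarith
    have hPeq : P = 6 * (R:ℤ) + 3 := by omega
    -- equality throughout
    have hhexeq : ((hexF a₁ a₂ b₁ b₂ c₁ c₂).card : ℤ) = (S.card : ℤ) := by
      have hm' : 12 * ((hexF a₁ a₂ b₁ b₂ c₁ c₂).card : ℤ) ≤ P ^ 2 + 3 := hmaster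
      rw [hPeq] at hm'
      linarith
    have hSeq : S = hexF a₁ a₂ b₁ b₂ c₁ c₂ := by
      apply Finset.eq_of_subset_of_card_le hsub
      exact_mod_cast le_of_eq hhexeq
    have h12eq : 12 * ((hexF a₁ a₂ b₁ b₂ c₁ c₂).card : ℤ) = P ^ 2 + 3 := by
      rw [hhexeq, hPeq]; linarith [hgoal]
    obtain ⟨hpq, hqr⟩ := hmeq h12eq
    have hp : a₂ - a₁ = 2 * (R:ℤ) := by omega
    have hq : b₂ - b₁ = 2 * (R:ℤ) := by omega
    have hr : c₂ - c₁ = 2 * (R:ℤ) := by omega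
    -- now pin k₁ = k₂ = R
    have hdirect := hex_card_direct a₁ a₂ b₁ b₂ c₁ c₂ haa hbb h1 h2 (by omega) (by omega)
    rw [hhexeq, hcard] at hdirect
    have ha2 : a₂ = a₁ + 2 * (R:ℤ) := by omega
    have hb2 : b₂ = b₁ + 2 * (R:ℤ) := by omega
    have hc2 : c₂ = c₁ + 2 * (R:ℤ) := by omega
    rw [ha2, hb2, hc2] at hdirect
    have hk2 : 2 * (c₁ - a₁ - b₁ - (R:ℤ)) ^ 2 = 0 := by linear_combination hdirect
    have hk0 : (c₁ - a₁ - b₁ - (R:ℤ)) ^ 2 = 0 := by linarith [sq_nonneg (c₁ - a₁ - b₁ - (R:ℤ))]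
    have hkval : c₁ = a₁ + b₁ + (R:ℤ) :=
      by have := pow_eq_zero_iff (n := 2) (by norm_num) |>.1 hk0; omega
    refine ⟨(a₁ + R, b₁ + R), ?_⟩
    rw [hSeq]
    ext x
    rw [ballF, mem_hexF, mem_hexF]
    dsimp only
    constructor
    · intro h; omega
    · intro h; omega

lemma extPer_ge_six (S : Finset (ℤ × ℤ)) (hne : S.Nonempty) : 6 ≤ extPer S := by
  have h := six_le_extPer_aux S
  have h1 : 0 < (S.image Prod.fst).card := Finset.card_pos.2 (hne.image _)
  have h2 : 0 < (S.image Prod.snd).card := Finset.card_pos.2 (hne.image _)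
  have h3 : 0 < (S.image (fun x : ℤ × ℤ => x.1 + x.2)).card := Finset.card_pos.2 (hne.image _)
  omega

lemma global_bound : ∀ N : ℕ, ∀ S : Finset (ℤ × ℤ), S.card = N → S.Nonempty →
    48 * (S.card : ℤ) ≤ (extPer S : ℤ) ^ 2 + 12 ∧
    (¬ connIn S → 48 * (S.card : ℤ) + 48 ≤ (extPer S : ℤ) ^ 2) := by
  intro N
  induction N using Nat.strong_induction_on with
  | _ N ih =>
    intro S hcard hne
    by_cases hconn : connIn S
    · exact ⟨(conn_analysis S hne hconn).1, fun h => absurd hconn h⟩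
    · -- disconnected: split off a component
      have hnc := hconn
      unfold connIn at hnc
      push_neg at hnc
      obtain ⟨x, hx, y, hy, hreach⟩ := hnc
      set C := compIn S x with hC
      have hCS : C ⊆ S := compIn_subset
      have hyC : y ∉ C := fun h => hreach (mem_compIn.1 h).2
      have hxC : x ∈ C := mem_compIn_self hx
      have hCne : C.Nonempty := ⟨x, hxC⟩
      have hRne : (S \ C).Nonempty := ⟨y, Finset.mem_sdiff.2 ⟨hy, hyC⟩⟩
      have hcl : ∀ y ∈ C, ∀ z ∈ S, hexGraph.Adj y z → z ∈ C := by
        intro u hu z hz hadj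
        exact compIn_closed hu hz hadj
      have hsplit := extPer_split hCS hcl
      have hcards : C.card + (S \ C).card = S.card := by
        rw [Finset.card_sdiff_of_subset hCS]
        have := Finset.card_le_card hCS
        omega
      have hClt : C.card < N := by
        have : (S \ C).card ≠ 0 := Finset.card_ne_zero.2 hRne
        omega
      have hRlt : (S \ C).card < N := by
        have : C.card ≠ 0 := Finset.card_ne_zero.2 hCne
        omega
      obtain ⟨ihC, _⟩ := ih C.card hClt C rfl hCne
      obtain ⟨ihR, _⟩ := ih (S \ C).card hRlt (S \ C) rfl hRne
      have h6C : (6 : ℤ) ≤ (extPer C : ℤ) := by exact_mod_cast extPer_ge_six C hCne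
      have h6R : (6 : ℤ) ≤ (extPer (S \ C) : ℤ) := by exact_mod_cast extPer_ge_six _ hRne
      have hper : (extPer S : ℤ) = (extPer C : ℤ) + (extPer (S \ C) : ℤ) := by
        exact_mod_cast congrArg (Nat.cast : ℕ → ℤ) hsplit
      have hcardz : (S.card : ℤ) = (C.card : ℤ) + ((S \ C).card : ℤ) := by
        exact_mod_cast (congrArg (Nat.cast : ℕ → ℤ) hcards).symm
      constructor
      · nlinarith [mul_le_mul h6C h6R (by norm_num) (by linarith)]
      · intro _
        nlinarith [mul_le_mul h6C h6R (by norm_num) (by linarith)]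


/-- `tmin n` is the minimum exterior perimeter over all sets of `n` cells. -/
noncomputable def tmin (n : ℕ) : ℕ :=
  sInf {m : ℕ | ∃ S : Finset (ℤ × ℤ), S.card = n ∧ extPer S = m}

/-- For `n = 3m² − 3m + 1` the minimum exterior perimeter is `12m − 6 = √(48n − 12)`, and
it is achieved exactly by the graph-metric balls `B(c, m−1)` (regular hexagonal clusters);
in particular the minimizer is unique up to translation. -/
theorem stmt6 (m n : ℕ) (hm : 1 ≤ m) (hn : n = 3 * m ^ 2 - 3 * m + 1) :
    tmin n = 12 * m - 6 ∧
    (12 * m - 6) ^ 2 = 48 * n - 12 ∧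
    (∀ S : Finset (ℤ × ℤ), S.card = n →
      (extPer S = 12 * m - 6 ↔
        ∃ c : ℤ × ℤ, (S : Set (ℤ × ℤ)) = {x | hexGraph.dist c x ≤ m - 1})) ∧
    (∀ S₁ S₂ : Finset (ℤ × ℤ), S₁.card = n → S₂.card = n →
      extPer S₁ = 12 * m - 6 → extPer S₂ = 12 * m - 6 →
        ∃ v : ℤ × ℤ, S₂ = S₁.image (fun x => x + v)) := by
  obtain ⟨R, rfl⟩ : ∃ R, m = R + 1 := ⟨m - 1, by omega⟩
  have hsq1 : 3 * (R + 1) ^ 2 = 3 * R ^ 2 + 6 * R + 3 := by ring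
  have hnval : n = 3 * R ^ 2 + 3 * R + 1 := by omega
  have hM : 12 * (R + 1) - 6 = 12 * R + 6 := by omega
  have hmm : (R + 1) - 1 = R := by omega
  have hsqM : (12 * R + 6) ^ 2 = 144 * R ^ 2 + 144 * R + 36 := by ring
  have hnpos : 1 ≤ n := by omega
  -- the ball witness
  have hballcard : ∀ c : ℤ × ℤ, (ballF c R).card = n := by
    intro c; rw [ballF_card]; omega
  have hballper : ∀ c : ℤ × ℤ, extPer (ballF c R) = 12 * R + 6 := by
    intro c; rw [extPer_ballF]; omega
  -- key classification
  have hclass : ∀ S : Finset (ℤ × ℤ), S.card = n → extPer S = 12 * R + 6 →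
      ∃ c : ℤ × ℤ, S = ballF c R := by
    intro S hcard hper
    have hne : S.Nonempty := Finset.card_pos.1 (by omega)
    have hglob := global_bound S.card S rfl hne
    have hconn : connIn S := by
      by_contra hnc
      have h2 := hglob.2 hnc
      rw [hper, hcard] at h2
      have : ((12 * R + 6 : ℕ) : ℤ) ^ 2 = 144 * (R:ℤ) ^ 2 + 144 * R + 36 := by
        push_cast; ring
      rw [this] at h2
      have : ((n : ℤ)) = 3 * (R:ℤ) ^ 2 + 3 * R + 1 := by exact_mod_cast hnval
      nlinarith
    have := (conn_analysis S hne hconn).2 R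
      (by rw [hcard]; exact_mod_cast hnval)
      (by rw [hper]; push_cast; ring)
    exact this
  refine ⟨?_, by rw [hM, hsqM]; omega, ?_, ?_⟩
  · -- tmin
    rw [hM]
    have hmem : (12 * R + 6) ∈ {k : ℕ | ∃ S : Finset (ℤ × ℤ), S.card = n ∧ extPer S = k} :=
      ⟨ballF 0 R, hballcard 0, hballper 0⟩
    apply le_antisymm
    · exact Nat.sInf_le hmem
    · have hne : {k : ℕ | ∃ S : Finset (ℤ × ℤ), S.card = n ∧ extPer S = k}.Nonempty :=
        ⟨_, hmem⟩
      obtain ⟨S, hScard, hSper⟩ := Nat.sInf_mem hne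
      show 12 * R + 6 ≤ tmin n
      rw [show tmin n = extPer S from hSper.symm]
      have hSne : S.Nonempty := Finset.card_pos.1 (by omega)
      have hglob := (global_bound S.card S rfl hSne).1
      rw [hScard] at hglob
      have hnz : ((n : ℤ)) = 3 * (R:ℤ) ^ 2 + 3 * R + 1 := by exact_mod_cast hnval
      by_contra hlt
      push_neg at hlt
      have hltz : (extPer S : ℤ) < 12 * (R:ℤ) + 6 := by exact_mod_cast hlt
      have hnn : (0:ℤ) ≤ (extPer S : ℤ) := by positivity
      nlinarith
  · -- iff
    intro S hcard
    rw [hM, hmm]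
    constructor
    · intro hper
      obtain ⟨c, rfl⟩ := hclass S hcard hper
      exact ⟨c, coe_ballF c R⟩
    · rintro ⟨c, hc⟩
      have hSeq : S = ballF c R := by
        apply Finset.coe_injective
        rw [hc, coe_ballF]
      rw [hSeq]
      exact hballper c
  · -- uniqueness up to translation
    intro S₁ S₂ h1 h2 hp1 hp2
    rw [hM] at hp1 hp2
    obtain ⟨c₁, rfl⟩ := hclass S₁ h1 hp1
    obtain ⟨c₂, rfl⟩ := hclass S₂ h2 hp2
    refine ⟨c₂ - c₁, ?_⟩
    ext x
    simp only [Finset.mem_image, mem_ballF]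
    constructor
    · intro hx
      refine ⟨x - (c₂ - c₁), ?_, by ring⟩
      rw [show x - (c₂ - c₁) - c₁ = x - c₂ by ring]
      exact hx
    · rintro ⟨y, hy, rfl⟩
      rw [show y + (c₂ - c₁) - c₂ = y - c₁ by ring]
      exact hy
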